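/- (Lemma 4.7, differential-inequality decay.) Let f : [0,∞) → ℝ be differentiable, and suppose there are constants C ≥ 0 and d₁, d₂ > 0 with d₁ ≠ d₂ such that |f'(t) + d₁·f(t)| ≤ C·e^{−d₂·t} for all t > 0. Then, with d := min(d₁, d₂), there exists a constant C' ≥ 0 (depending only on |f(0)|, C, d₁, d₂) such that |f(t)| ≤ C'·e^{−d·t} for all t ≥ 0; in fact one may take C' = |f(0)| + 2C/|d₁ − d₂|. -/

import Mathlib

/-- The modified Bessel function of the first kind of (nonnegative integer) order `n`:
`I_n(x) = (x/2)^n * ∑_{k=0}^∞ (x/2)^{2k} / (k! (n+k)!)`. -/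
noncomputable def besselI (n : ℕ) (x : ℝ) : ℝ :=
  (x / 2) ^ n * ∑' k : ℕ, (x / 2) ^ (2 * k) / ((Nat.factorial k : ℝ) * (Nat.factorial (n + k) : ℝ))

lemma aux_decay (f : ℝ → ℝ)
    (hf : ∀ t ∈ Set.Ici (0 : ℝ), DifferentiableAt ℝ f t)
    (C d₁ d₂ : ℝ) (ha : d₁ - d₂ ≠ 0)
    (h : ∀ t : ℝ, 0 < t → deriv f t + d₁ * f t ≤ C * Real.exp (-d₂ * t)) :
    ∀ t : ℝ, 0 ≤ t →
      Real.exp (d₁ * t) * f t - f 0 ≤ C * (Real.exp ((d₁ - d₂) * t) - 1) / (d₁ - d₂) := by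
  set a := d₁ - d₂ with ha_def
  set φ : ℝ → ℝ := fun s => Real.exp (d₁ * s) * f s - C * (Real.exp (a * s) - 1) / a with hφ
  have hgd : ∀ x : ℝ, DifferentiableAt ℝ f x →
      HasDerivAt φ (Real.exp (d₁ * x) * (deriv f x + d₁ * f x) - C * Real.exp (a * x)) x := by
    intro x hx
    have h1 : HasDerivAt (fun s : ℝ => Real.exp (d₁ * s)) (Real.exp (d₁ * x) * d₁) x :=
      by simpa using ((hasDerivAt_id x).const_mul d₁).exp
    have h2 : HasDerivAt (fun s : ℝ => Real.exp (d₁ * s) * f s)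
        (Real.exp (d₁ * x) * d₁ * f x + Real.exp (d₁ * x) * deriv f x) x :=
      h1.mul hx.hasDerivAt
    have h3 : HasDerivAt (fun s : ℝ => C * (Real.exp (a * s) - 1) / a)
        (C * Real.exp (a * x)) x := by
      have e1 : HasDerivAt (fun s : ℝ => Real.exp (a * s)) (Real.exp (a * x) * a) x :=
        by simpa using ((hasDerivAt_id x).const_mul a).exp
      have e2 : HasDerivAt (fun s : ℝ => C * (Real.exp (a * s) - 1) / a)
          (C * (Real.exp (a * x) * a) / a) x := ((e1.sub_const 1).const_mul C).div_const a
      have : C * (Real.exp (a * x) * a) / a = C * Real.exp (a * x) := by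
        field_simp
      rwa [this] at e2
    have := h2.sub h3
    refine this.congr_deriv ?_
    ring
  have hmono : AntitoneOn φ (Set.Ici (0 : ℝ)) := by
    apply antitoneOn_of_deriv_nonpos (convex_Ici 0)
    · apply ContinuousOn.sub
      · exact (Real.continuous_exp.comp (continuous_const.mul continuous_id)).continuousOn.mul
          (fun x hx => (hf x hx).continuousAt.continuousWithinAt)
      · exact Continuous.continuousOn (by continuity)
    · intro x hx
      rw [interior_Ici] at hx
      exact ((hgd x (hf x (Set.mem_Ici.mpr (le_of_lt hx)))).differentiableAt).differentiableWithinAt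
    · intro x hx
      rw [interior_Ici] at hx
      rw [(hgd x (hf x (Set.mem_Ici.mpr (le_of_lt hx)))).deriv]
      have hle := h x hx
      have hpos : (0:ℝ) < Real.exp (d₁ * x) := Real.exp_pos _
      have : Real.exp (d₁ * x) * (deriv f x + d₁ * f x) ≤
          Real.exp (d₁ * x) * (C * Real.exp (-d₂ * x)) := by
        exact mul_le_mul_of_nonneg_left hle hpos.le
      have heq : Real.exp (d₁ * x) * (C * Real.exp (-d₂ * x)) = C * Real.exp (a * x) := by
        simp only [ha_def]
        rw [mul_left_comm, ← Real.exp_add]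
        ring_nf
      linarith [this, heq ▸ this]
  intro t ht
  have := hmono (Set.self_mem_Ici) ht ht
  simp only [hφ] at this
  simp only [mul_zero, Real.exp_zero, one_mul, sub_self, zero_div, mul_zero, sub_zero] at this
  linarith [this]

/-- Lemma 4.7 (differential-inequality decay): if `f` is differentiable on `[0,∞)` and
`|f'(t) + d₁ f(t)| ≤ C e^{−d₂ t}` for all `t > 0`, with `C ≥ 0`, `d₁, d₂ > 0`, `d₁ ≠ d₂`,
then `|f(t)| ≤ (|f(0)| + 2C/|d₁ − d₂|) e^{− min(d₁,d₂) t}` for all `t ≥ 0`. -/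
theorem decay_from_differential_inequality (f : ℝ → ℝ)
    (hf : ∀ t ∈ Set.Ici (0 : ℝ), DifferentiableAt ℝ f t)
    (C d₁ d₂ : ℝ) (hC : 0 ≤ C) (hd₁ : 0 < d₁) (hd₂ : 0 < d₂) (hne : d₁ ≠ d₂)
    (hineq : ∀ t : ℝ, 0 < t → |deriv f t + d₁ * f t| ≤ C * Real.exp (-d₂ * t)) :
    ∀ t : ℝ, 0 ≤ t →
      |f t| ≤ (|f 0| + 2 * C / |d₁ - d₂|) * Real.exp (-(min d₁ d₂) * t) := by
  have ha : d₁ - d₂ ≠ 0 := sub_ne_zero.mpr hne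
  have h1 := aux_decay f hf C d₁ d₂ ha
    (fun t ht => (le_abs_self _).trans (hineq t ht))
  have h2 := aux_decay (fun t => -f t) (fun t ht => (hf t ht).neg) C d₁ d₂ ha
    (fun t ht => by
      have h' := (neg_le_abs _).trans (hineq t ht)
      simp only [deriv.fun_neg]
      linarith)
  intro t ht
  have h1t := h1 t ht
  have h2t := h2 t ht
  set K := C * (Real.exp ((d₁ - d₂) * t) - 1) / (d₁ - d₂) with hK
  have habs : Real.exp (d₁ * t) * |f t| ≤ |f 0| + K := by
    rcases abs_cases (f t) with ⟨h, _⟩ | ⟨h, _⟩ <;> rw [h] <;>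
      cases abs_cases (f 0) with
      | inl h0 => nlinarith [Real.exp_pos (d₁ * t)]
      | inr h0 => nlinarith [Real.exp_pos (d₁ * t)]
  have hft : |f t| ≤ (|f 0| + K) * Real.exp (-d₁ * t) := by
    have hp : (0:ℝ) < Real.exp (d₁ * t) := Real.exp_pos _
    have := mul_le_mul_of_nonneg_right habs (Real.exp_pos (-d₁ * t)).le
    rwa [mul_assoc, mul_comm (|f t|), ← mul_assoc, ← Real.exp_add,
      show d₁ * t + -d₁ * t = 0 by ring, Real.exp_zero, one_mul] at this
  refine hft.trans ?_
  have hA : (0:ℝ) < |d₁ - d₂| := abs_pos.mpr ha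
  rcases lt_or_gt_of_ne hne with hlt | hgt
  · -- d₁ < d₂ : min = d₁
    rw [min_eq_left hlt.le]
    have haneg : d₁ - d₂ < 0 := by linarith
    have hAa : |d₁ - d₂| = -(d₁ - d₂) := abs_of_neg haneg
    have hexple : Real.exp ((d₁ - d₂) * t) ≤ 1 := by
      rw [show (1:ℝ) = Real.exp 0 by simp]
      exact Real.exp_le_exp.mpr (by nlinarith)
    have hB : (0:ℝ) < d₂ - d₁ := by linarith
    have hAa' : |d₁ - d₂| = d₂ - d₁ := by rw [hAa]; ring
    have hKle : K ≤ 2 * C / |d₁ - d₂| := by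
      rw [hK, hAa']
      have hrw : C * (Real.exp ((d₁ - d₂) * t) - 1) / (d₁ - d₂)
          = C * (1 - Real.exp ((d₁ - d₂) * t)) / (d₂ - d₁) := by
        field_simp
        ring
      rw [hrw, div_le_div_iff₀ hB hB]
      nlinarith [Real.exp_pos ((d₁ - d₂) * t), mul_nonneg hC hB.le,
        mul_nonneg (mul_nonneg hC hB.le) (Real.exp_pos ((d₁ - d₂) * t)).le]
    have := mul_le_mul_of_nonneg_right (add_le_add_right hKle (|f 0|))
      (Real.exp_pos (-d₁ * t)).le
    exact this
  · -- d₂ < d₁ : min = d₂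
    rw [min_eq_right hgt.le]
    have hapos : 0 < d₁ - d₂ := by linarith
    have hAa : |d₁ - d₂| = d₁ - d₂ := abs_of_pos hapos
    have hE1 : Real.exp (-d₁ * t) ≤ Real.exp (-d₂ * t) :=
      Real.exp_le_exp.mpr (by nlinarith)
    have hKE : K * Real.exp (-d₁ * t) ≤ C / (d₁ - d₂) * Real.exp (-d₂ * t) := by
      rw [hK]
      have : C * (Real.exp ((d₁ - d₂) * t) - 1) / (d₁ - d₂) * Real.exp (-d₁ * t)
          = (C * Real.exp ((d₁ - d₂) * t) * Real.exp (-d₁ * t)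
             - C * Real.exp (-d₁ * t)) / (d₁ - d₂) := by ring
      rw [this, mul_assoc C, ← Real.exp_add, show (d₁ - d₂) * t + -d₁ * t = -d₂ * t by ring,
        div_le_iff₀ hapos]
      have hcc : C / (d₁ - d₂) * Real.exp (-d₂ * t) * (d₁ - d₂) = C * Real.exp (-d₂ * t) := by
        field_simp
      rw [hcc]
      have := mul_nonneg hC (Real.exp_pos (-d₁ * t)).le
      linarith
    have hfin : |f 0| * Real.exp (-d₁ * t) + K * Real.exp (-d₁ * t)
        ≤ (|f 0| + 2 * C / |d₁ - d₂|) * Real.exp (-d₂ * t) := by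
      have h0 : |f 0| * Real.exp (-d₁ * t) ≤ |f 0| * Real.exp (-d₂ * t) :=
        mul_le_mul_of_nonneg_left hE1 (abs_nonneg _)
      have hC2 : C / (d₁ - d₂) ≤ 2 * C / |d₁ - d₂| := by
        rw [hAa, div_le_div_iff₀ hapos hapos]
        nlinarith
      have hKE' : K * Real.exp (-d₁ * t) ≤ 2 * C / |d₁ - d₂| * Real.exp (-d₂ * t) :=
        hKE.trans (mul_le_mul_of_nonneg_right hC2 (Real.exp_pos _).le)
      rw [add_mul]
      linarith
    linarith [hfin, show (|f 0| + K) * Real.exp (-d₁ * t)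
      = |f 0| * Real.exp (-d₁ * t) + K * Real.exp (-d₁ * t) by ring]
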